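/- Let T be a finite tree poset, let Q be a finite poset, let t ∈ T and q ∈ Q. If there exists a surjective p-morphism from the upset ↑t of T onto the upset ↑q of Q, then for every immediate successor p of q in Q there exists an immediate successor s of t in T such that there is a surjective p-morphism from ↑s onto ↑p. -/
import Mathlib


/-- A p-morphism between posets: the homomorphism property (HP) and the
backward property (BP). -/
def IsPMorphism {P Q : Type} [PartialOrder P] [PartialOrder Q] (h : P → Q) : Prop :=
  Monotone h ∧ ∀ (x : P) (y : Q), h x ≤ y → ∃ z : P, x ≤ z ∧ h z = y

/-- A poset is a tree if it has a minimum element (a root) and every principal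
downset is a chain. -/
def IsTreePoset (T : Type) [PartialOrder T] : Prop :=
  (∃ r : T, ∀ x : T, r ≤ x) ∧ ∀ t : T, IsChain (· ≤ ·) (Set.Iic t)

/-- There exists a surjective p-morphism from the upset `↑t` onto the upset `↑q`
(with the inherited orders). -/
def HasSurjPMorphUp {T Q : Type} [PartialOrder T] [PartialOrder Q] (t : T) (q : Q) : Prop :=
  ∃ h : {x : T // t ≤ x} → {y : Q // q ≤ y}, Function.Surjective h ∧ IsPMorphism h

open Classical

section Aux

variable {T Q : Type} [PartialOrder T] [PartialOrder Q]

/-- An "unbundled" version of a surjective p-morphism from `↑t` onto `↑q`. -/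
def Good (h : T → Q) (t : T) (q : Q) : Prop :=
  (∀ x, t ≤ x → q ≤ h x) ∧
  (∀ x y, t ≤ x → x ≤ y → h x ≤ h y) ∧
  (∀ x y', t ≤ x → h x ≤ y' → ∃ z, x ≤ z ∧ h z = y') ∧
  (∀ y', q ≤ y' → ∃ x, t ≤ x ∧ h x = y')

theorem good_of_has {t : T} {q : Q} (hex : HasSurjPMorphUp t q) :
    ∃ H : T → Q, Good H t q := by
  obtain ⟨h, hsurj, hmono, hbp⟩ := hex
  refine ⟨fun x => if hx : t ≤ x then (h ⟨x, hx⟩).1 else (h ⟨t, le_rfl⟩).1, ?_, ?_, ?_, ?_⟩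
  · intro x hx
    simp only [dif_pos hx]
    exact (h ⟨x, hx⟩).2
  · intro x y hx hxy
    have hy : t ≤ y := hx.trans hxy
    simp only [dif_pos hx, dif_pos hy]
    exact hmono (show (⟨x, hx⟩ : {x : T // t ≤ x}) ≤ ⟨y, hy⟩ from hxy)
  · intro x y' hx hle
    simp only [dif_pos hx] at hle
    have hqy' : q ≤ y' := le_trans (h ⟨x, hx⟩).2 hle
    obtain ⟨z, hz1, hz2⟩ := hbp ⟨x, hx⟩ ⟨y', hqy'⟩ hle
    refine ⟨z.1, hz1, ?_⟩
    have hz : t ≤ z.1 := hx.trans hz1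
    simp only [dif_pos hz]
    have : (⟨z.1, hz⟩ : {x : T // t ≤ x}) = z := Subtype.ext rfl
    rw [this, hz2]
  · intro y' hy'
    obtain ⟨x, hx⟩ := hsurj ⟨y', hy'⟩
    refine ⟨x.1, x.2, ?_⟩
    simp only [dif_pos x.2]
    have : (⟨x.1, x.2⟩ : {x : T // t ≤ x}) = x := Subtype.ext rfl
    rw [this, hx]

theorem has_of_good {t : T} {q : Q} {H : T → Q} (hg : Good H t q) :
    HasSurjPMorphUp t q := by
  obtain ⟨h1, h2, h3, h4⟩ := hg
  refine ⟨fun x => ⟨H x.1, h1 x.1 x.2⟩, ?_, ?_, ?_⟩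
  · intro y
    obtain ⟨x, hx, hx2⟩ := h4 y.1 y.2
    exact ⟨⟨x, hx⟩, Subtype.ext hx2⟩
  · intro x y hxy
    exact h2 x.1 y.1 x.2 hxy
  · intro x y hle
    obtain ⟨z, hz1, hz2⟩ := h3 x.1 y.1 x.2 hle
    exact ⟨⟨z, x.2.trans hz1⟩, hz1, Subtype.ext hz2⟩

theorem good_up {t s : T} {q : Q} {H : T → Q} (hg : Good H t q) (hts : t ≤ s) :
    Good H s (H s) := by
  obtain ⟨h1, h2, h3, h4⟩ := hg
  refine ⟨?_, ?_, ?_, ?_⟩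
  · intro x hx; exact h2 s x hts hx
  · intro x y hx hxy; exact h2 x y (hts.trans hx) hxy
  · intro x y' hx hle; exact h3 x y' (hts.trans hx) hle
  · intro y' hy'; exact h3 s y' hts hy'

theorem exists_cover_below [Finite T] {t x : T} (htx : t < x) :
    ∃ s : T, t ⋖ s ∧ s ≤ x := by
  have hwf : WellFounded ((· < ·) : T → T → Prop) := wellFounded_lt
  obtain ⟨m, hm, hmin⟩ := hwf.has_min {u : T | t < u ∧ u ≤ x} ⟨x, htx, le_rfl⟩
  refine ⟨m, ⟨hm.1, fun c hc1 hc2 => ?_⟩, hm.2⟩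
  exact hmin c ⟨hc1, hc2.le.trans hm.2⟩ hc2

theorem cover_unique (htree : IsTreePoset T) {t s₁ s₂ x : T}
    (h1 : t ⋖ s₁) (h2 : t ⋖ s₂) (hx1 : s₁ ≤ x) (hx2 : s₂ ≤ x) : s₁ = s₂ := by
  by_contra hne
  rcases htree.2 x hx1 hx2 hne with hle | hle
  · exact h2.2 h1.lt (lt_of_le_of_ne hle hne)
  · exact h1.2 h2.lt (lt_of_le_of_ne hle (Ne.symm hne))

theorem exists_max_above [Finite Q] (p : Q) :
    ∃ m : Q, p ≤ m ∧ ∀ y, m ≤ y → y = m := by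
  have hwf : WellFounded ((· > ·) : Q → Q → Prop) := wellFounded_gt
  obtain ⟨m, hm, hmin⟩ := hwf.has_min {y : Q | p ≤ y} ⟨p, le_rfl⟩
  refine ⟨m, hm, fun y hy => ?_⟩
  have : ¬ m < y := hmin y (hm.trans hy)
  exact ((lt_or_eq_of_le hy).resolve_left this).symm

/-- Key lemma: if a tree-upset `↑t` maps p-morphically onto `↑q` and `q ⋖ p`,
then `↑t` also maps p-morphically onto `↑p`. -/
theorem claimD [Finite T] [Finite Q] (htree : IsTreePoset T) :
    ∀ (n : ℕ) (t : T) (q p : Q) (h : T → Q), (Set.Ici t).ncard ≤ n →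
      Good h t q → q ⋖ p → ∃ g : T → Q, Good g t p := by
  intro n
  induction n using Nat.strong_induction_on with
  | _ n IH =>
  intro t q p h hcard hg hqp
  obtain ⟨hg1, hg2, hg3, hg4⟩ := hg
  -- h t = q
  have hht : h t = q := by
    obtain ⟨x, hx, hx2⟩ := hg4 q le_rfl
    exact le_antisymm (hx2 ▸ hg2 t x le_rfl hx) (hg1 t le_rfl)
  have hnpq : ¬ p ≤ q := fun hle => absurd (lt_of_le_of_lt hle hqp.lt) (lt_irrefl p)
  obtain ⟨m, hpm, hmmax⟩ := exists_max_above p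
  -- an element mapped to p
  obtain ⟨x₀, hx₀t, hx₀⟩ := hg4 p hqp.le
  have htx₀ : t < x₀ := lt_of_le_of_ne hx₀t (fun he => hnpq (le_of_eq (by rw [← hx₀, ← he, hht])))
  obtain ⟨s₀, hs₀cov, hs₀x₀⟩ := exists_cover_below htx₀
  -- cards of strict branches
  have key : ∀ s : T, t ⋖ s → (Set.Ici s).ncard < n := by
    intro s hs
    have hsub : Set.Ici s ⊂ Set.Ici t := by
      constructor
      · intro u hu; exact hs.le.trans hu
      · intro hsub'
        have : s ≤ t := hsub' (Set.self_mem_Ici)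
        exact absurd (lt_of_lt_of_le hs.lt this) (lt_irrefl t)
    exact lt_of_lt_of_le (Set.ncard_lt_ncard hsub (Set.toFinite _)) hcard
  -- branch head selector
  have Sex : ∀ x : T, t < x → ∃ s : T, t ⋖ s ∧ s ≤ x := fun x hx => exists_cover_below hx
  set S : T → T := fun x => if hx : t < x then Classical.choose (Sex x hx) else x with hSdef
  have Sspec : ∀ x (hx : t < x), t ⋖ S x ∧ S x ≤ x := by
    intro x hx
    simp only [hSdef, dif_pos hx]
    exact Classical.choose_spec (Sex x hx)
  have Suniq : ∀ x (hx : t < x) (s : T), t ⋖ s → s ≤ x → S x = s := by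
    intro x hx s hcov hsx
    exact cover_unique htree (Sspec x hx).1 hcov (Sspec x hx).2 hsx
  -- recursive maps on branches where h s = q
  set G : T → T → Q := fun s =>
    if hs : (Set.Ici s).ncard < n ∧ Good h s q then
      Classical.choose (IH _ hs.1 s q p h le_rfl hs.2 hqp)
    else fun _ => p with hGdef
  have Gspec : ∀ s : T, (Set.Ici s).ncard < n → Good h s q → Good (G s) s p := by
    intro s h1 h2
    simp only [hGdef, dif_pos (And.intro h1 h2)]
    exact Classical.choose_spec (IH _ h1 s q p h le_rfl h2 hqp)
  have goodbranch : ∀ s : T, t ⋖ s → h s = q → Good (G s) s p := by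
    intro s hcov hsq
    exact Gspec s (key s hcov) (hsq ▸ good_up ⟨hg1, hg2, hg3, hg4⟩ hcov.le)
  -- the new map
  set g : T → Q := fun x =>
    if hx : t < x then
      (if p ≤ h (S x) then h x else if h (S x) = q then G (S x) x else m)
    else p with hgdef
  have gval : ∀ x, t < x →
      g x = (if p ≤ h (S x) then h x else if h (S x) = q then G (S x) x else m) := by
    intro x hx; simp only [hgdef, dif_pos hx]
  have gt : g t = p := by simp only [hgdef, dif_neg (lt_irrefl t)]
  -- property (1)
  have P1 : ∀ x, t ≤ x → p ≤ g x := by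
    intro x hx
    rcases eq_or_lt_of_le hx with he | hlt
    · rw [← he, gt]
    · rw [gval x hlt]
      split_ifs with h1 h2
      · exact h1.trans (hg2 (S x) x (Sspec x hlt).1.le (Sspec x hlt).2)
      · exact (goodbranch (S x) (Sspec x hlt).1 h2).1 x (Sspec x hlt).2
      · exact hpm
  -- property (2)
  have P2 : ∀ x y, t ≤ x → x ≤ y → g x ≤ g y := by
    intro x y hx hxy
    rcases eq_or_lt_of_le hx with he | hlt
    · rw [← he, gt]; exact P1 y (hx.trans hxy)
    · have hy : t < y := lt_of_lt_of_le hlt hxy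
      have hSyx : S y = S x := Suniq y hy (S x) (Sspec x hlt).1 ((Sspec x hlt).2.trans hxy)
      rw [gval x hlt, gval y hy, hSyx]
      split_ifs with h1 h2
      · exact hg2 x y hlt.le hxy
      · exact (goodbranch (S x) (Sspec x hlt).1 h2).2.1 x y (Sspec x hlt).2 hxy
      · exact le_rfl
  -- the s₀ branch: h s₀ = q or h s₀ = p
  have hs₀le : h s₀ ≤ p := by rw [← hx₀]; exact hg2 s₀ x₀ hs₀cov.le hs₀x₀
  have hs₀ge : q ≤ h s₀ := hg1 s₀ hs₀cov.le
  have hs₀cases : h s₀ = q ∨ h s₀ = p := by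
    rcases eq_or_lt_of_le hs₀le with he | hlt
    · right; exact he
    · left
      rcases eq_or_lt_of_le hs₀ge with he | hlt2
      · exact he.symm
      · exact absurd hlt (hqp.2 hlt2)
  -- property (4): surjectivity
  have P4 : ∀ y', p ≤ y' → ∃ z, t ≤ z ∧ g z = y' := by
    intro y' hy'
    rcases hs₀cases with hq | hp
    · -- recursive branch covers ↑p
      have hnp : ¬ p ≤ h s₀ := by rw [hq]; exact hnpq
      obtain ⟨z, hz1, hz2⟩ := (goodbranch s₀ hs₀cov hq).2.2.2 y' hy'
      have htz : t < z := lt_of_lt_of_le hs₀cov.lt hz1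
      refine ⟨z, htz.le, ?_⟩
      rw [gval z htz, Suniq z htz s₀ hs₀cov hz1, if_neg hnp, if_pos hq]
      exact hz2
    · -- h branch onto ↑p
      obtain ⟨z, hz1, hz2⟩ := hg3 x₀ y' hx₀t (hx₀ ▸ hy')
      have htz : t < z := lt_of_lt_of_le htx₀ hz1
      refine ⟨z, htz.le, ?_⟩
      rw [gval z htz, Suniq z htz s₀ hs₀cov (hs₀x₀.trans hz1), if_pos (le_of_eq hp.symm)]
      exact hz2
  -- property (3): back property
  have P3 : ∀ x y', t ≤ x → g x ≤ y' → ∃ z, x ≤ z ∧ g z = y' := by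
    intro x y' hx hxy'
    rcases eq_or_lt_of_le hx with he | hlt
    · rw [← he, gt] at hxy'
      obtain ⟨z, hz1, hz2⟩ := P4 y' hxy'
      exact ⟨z, he ▸ hz1, hz2⟩
    · rw [gval x hlt] at hxy'
      split_ifs at hxy' with h1 h2
      · obtain ⟨z, hz1, hz2⟩ := hg3 x y' hlt.le hxy'
        have htz : t < z := lt_of_lt_of_le hlt hz1
        refine ⟨z, hz1, ?_⟩
        have hSz : S z = S x := Suniq z htz (S x) (Sspec x hlt).1 ((Sspec x hlt).2.trans hz1)
        rw [gval z htz, hSz, if_pos h1]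
        exact hz2
      · obtain ⟨z, hz1, hz2⟩ := (goodbranch (S x) (Sspec x hlt).1 h2).2.2.1 x y'
          (Sspec x hlt).2 hxy'
        have htz : t < z := lt_of_lt_of_le hlt hz1
        refine ⟨z, hz1, ?_⟩
        have hSz : S z = S x := Suniq z htz (S x) (Sspec x hlt).1 ((Sspec x hlt).2.trans hz1)
        rw [gval z htz, hSz, if_neg h1, if_pos h2]
        exact hz2
      · refine ⟨x, le_rfl, ?_⟩
        rw [gval x hlt, if_neg h1, if_neg h2]
        exact (hmmax y' hxy').symm
  exact ⟨g, P1, P2, P3, P4⟩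

end Aux

theorem successors_restriction {T Q : Type} [PartialOrder T] [PartialOrder Q]
    [Fintype T] [Fintype Q] (htree : IsTreePoset T)
    (t : T) (q : Q) (hex : HasSurjPMorphUp t q) :
    ∀ p : Q, q ⋖ p → ∃ s : T, t ⋖ s ∧ HasSurjPMorphUp s p := by
  intro p hqp
  obtain ⟨H, hg⟩ := good_of_has hex
  obtain ⟨hg1, hg2, hg3, hg4⟩ := hg
  have hht : H t = q := by
    obtain ⟨x, hx, hx2⟩ := hg4 q le_rfl
    exact le_antisymm (hx2 ▸ hg2 t x le_rfl hx) (hg1 t le_rfl)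
  have hnpq : ¬ p ≤ q := fun hle => absurd (lt_of_le_of_lt hle hqp.lt) (lt_irrefl p)
  obtain ⟨x₀, hx₀t, hx₀⟩ := hg4 p hqp.le
  have htx₀ : t < x₀ := lt_of_le_of_ne hx₀t (fun he => hnpq (le_of_eq (by rw [← hx₀, ← he, hht])))
  obtain ⟨s, hscov, hsx₀⟩ := exists_cover_below htx₀
  have hsle : H s ≤ p := by rw [← hx₀]; exact hg2 s x₀ hscov.le hsx₀
  have hsge : q ≤ H s := hg1 s hscov.le
  have hscases : H s = q ∨ H s = p := by
    rcases eq_or_lt_of_le hsle with he | hlt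
    · right; exact he
    · left
      rcases eq_or_lt_of_le hsge with he | hlt2
      · exact he.symm
      · exact absurd hlt (hqp.2 hlt2)
  refine ⟨s, hscov, ?_⟩
  rcases hscases with hq | hp
  · have hgood : Good H s q := hq ▸ good_up ⟨hg1, hg2, hg3, hg4⟩ hscov.le
    obtain ⟨g, hgg⟩ := claimD htree (Set.Ici s).ncard s q p H le_rfl hgood hqp
    exact has_of_good hgg
  · exact has_of_good (hp ▸ good_up ⟨hg1, hg2, hg3, hg4⟩ hscov.le)
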